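/- If R is an irreducible reduced root system and φ: V* → V, φ∨: V → V* are the maps defined by φ(α∨) = α for short coroots and φ∨(α) = α∨ for short roots, then the compositions φ∘φ∨: V → V and φ∨∘φ: V* → V* are both multiplication by d_α, the square-length of the coroot of a short root α (equivalently, 1 if R is simply laced, and the square-length of a long root otherwise). -/

import Mathlib

open Module

/-- A reduced root system `R` in a real vector space `V`, together with the
`Aut(R)`-invariant inner products on `V` and on `V* = Dual ℝ V`. -/
structure RootSystemData (V : Type) [AddCommGroup V] [Module ℝ V] : Type where
  /-- the (finite) set of roots -/
  roots : Finset V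
  /-- the coroot `α∨ ∈ V*` attached to a root `α` -/
  coroot : V → Module.Dual ℝ V
  span_eq_top : Submodule.span ℝ (roots : Set V) = ⊤
  root_ne_zero : ∀ α ∈ roots, α ≠ (0 : V)
  coroot_self : ∀ α ∈ roots, coroot α α = 2
  reflect_mem : ∀ α ∈ roots, ∀ β ∈ roots, β - coroot α β • α ∈ roots
  crystallographic : ∀ α ∈ roots, ∀ β ∈ roots, ∃ n : ℤ, coroot α β = (n : ℝ)
  reduced : ∀ α ∈ roots, ∀ t : ℝ, t • α ∈ roots → t = 1 ∨ t = -1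
  /-- the `Aut(R)`-invariant inner product on `V` -/
  B : V →ₗ[ℝ] V →ₗ[ℝ] ℝ
  B_symm : ∀ x y, B x y = B y x
  B_pos : ∀ x, x ≠ 0 → 0 < B x x
  B_invariant : ∀ σ : V ≃ₗ[ℝ] V, (∀ α ∈ roots, σ α ∈ roots) →
    ∀ α ∈ roots, ∀ β ∈ roots, B (σ α) (σ β) = B α β
  coroot_eq : ∀ α ∈ roots, ∀ x : V, coroot α x = 2 * B α x / B α α
  /-- the `Aut(R)`-invariant inner product on `V*` (for the dual root system `R∨`) -/
  Bd : Module.Dual ℝ V →ₗ[ℝ] Module.Dual ℝ V →ₗ[ℝ] ℝ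
  Bd_symm : ∀ x y, Bd x y = Bd y x
  Bd_pos : ∀ x, x ≠ 0 → 0 < Bd x x
  /-- the coroot of `α∨` in the dual root system `R∨` is evaluation at `α` -/
  dual_coroot_eq : ∀ α ∈ roots, ∀ y : Module.Dual ℝ V,
    y α = 2 * Bd (coroot α) y / Bd (coroot α) (coroot α)

namespace RootSystemData

variable {V : Type} [AddCommGroup V] [Module ℝ V] (D : RootSystemData V)

/-- `x` and `y` lie in the same irreducible component of the root system. -/
def SameComponent (x y : V) : Prop :=
  Relation.ReflTransGen (fun a b => a ∈ D.roots ∧ b ∈ D.roots ∧ D.B a b ≠ 0) x y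

/-- `R` is irreducible. -/
def IsIrreducible : Prop :=
  D.roots.Nonempty ∧ ∀ α ∈ D.roots, ∀ β ∈ D.roots, D.SameComponent α β

/-- `R` is simply laced: all roots have the same length. -/
def IsSimplyLaced : Prop := ∀ α ∈ D.roots, ∀ β ∈ D.roots, D.B α α = D.B β β

/-- `α` is a root that is short within its irreducible component. -/
def ShortRoot (α : V) : Prop :=
  α ∈ D.roots ∧ ∀ β ∈ D.roots, D.SameComponent α β → D.B α α ≤ D.B β β

/-- `α∨` is a coroot that is short within its irreducible component of `R∨`
(equivalently, `α` is a long root of its component). -/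
def ShortCoroot (α : V) : Prop :=
  α ∈ D.roots ∧ ∀ β ∈ D.roots, D.SameComponent α β →
    D.Bd (D.coroot α) (D.coroot α) ≤ D.Bd (D.coroot β) (D.coroot β)

/-- normalization: short roots in every irreducible component have square-length `1`. -/
def NormalizedPrimal : Prop := ∀ α, D.ShortRoot α → D.B α α = 1

/-- normalization: short coroots in every irreducible component have square-length `1`. -/
def NormalizedDual : Prop := ∀ α, D.ShortCoroot α → D.Bd (D.coroot α) (D.coroot α) = 1

/-- the weight lattice `Λ_w ⊆ V`. -/
def weightLattice : Set V := {x | ∀ α ∈ D.roots, ∃ n : ℤ, D.coroot α x = (n : ℝ)}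

/-- the root lattice `Λ_r ⊆ V`. -/
def rootLattice : AddSubgroup V := AddSubgroup.closure (D.roots : Set V)

/-- the coweight lattice `Λ_w∨ ⊆ V*`. -/
def coweightLattice : Set (Module.Dual ℝ V) := {x | ∀ α ∈ D.roots, ∃ n : ℤ, x α = (n : ℝ)}

/-- the coroot lattice `Λ_r∨ ⊆ V*`. -/
def corootLattice : AddSubgroup (Module.Dual ℝ V) :=
  AddSubgroup.closure (D.coroot '' (D.roots : Set V))

end RootSystemData

namespace RootSystemData

variable {V : Type} [AddCommGroup V] [Module ℝ V] {D : RootSystemData V}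

lemma B_self_ne_zero {α : V} (hα : α ∈ D.roots) : D.B α α ≠ 0 :=
  (D.B_pos α (D.root_ne_zero α hα)).ne'

lemma coroot_ne_zero {α : V} (hα : α ∈ D.roots) : D.coroot α ≠ 0 := by
  intro h
  have := D.coroot_self α hα
  rw [h] at this
  simp at this

lemma Bd_coroot_pos {α : V} (hα : α ∈ D.roots) :
    0 < D.Bd (D.coroot α) (D.coroot α) :=
  D.Bd_pos _ (coroot_ne_zero hα)

/-- key step: for roots with nonzero pairing, `B(α,α)·Bd(α∨,α∨)` agrees. -/
lemma key_step {a b : V} (ha : a ∈ D.roots) (hb : b ∈ D.roots)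
    (hab : D.B a b ≠ 0) :
    D.B a a * D.Bd (D.coroot a) (D.coroot a) =
    D.B b b * D.Bd (D.coroot b) (D.coroot b) := by
  have h1 : D.coroot b a = 2 * D.Bd (D.coroot a) (D.coroot b) /
      D.Bd (D.coroot a) (D.coroot a) := D.dual_coroot_eq a ha (D.coroot b)
  have h2 : D.coroot a b = 2 * D.Bd (D.coroot b) (D.coroot a) /
      D.Bd (D.coroot b) (D.coroot b) := D.dual_coroot_eq b hb (D.coroot a)
  have h3 : D.coroot b a = 2 * D.B b a / D.B b b := D.coroot_eq b hb a
  have h4 : D.coroot a b = 2 * D.B a b / D.B a a := D.coroot_eq a ha b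
  have hsym : D.B b a = D.B a b := D.B_symm b a
  have hdsym : D.Bd (D.coroot b) (D.coroot a) = D.Bd (D.coroot a) (D.coroot b) :=
    D.Bd_symm _ _
  have haa := B_self_ne_zero ha
  have hbb := B_self_ne_zero hb
  have hda := (Bd_coroot_pos ha).ne'
  have hdb := (Bd_coroot_pos hb).ne'
  have e1 : 2 * D.B a b / D.B b b = 2 * D.Bd (D.coroot a) (D.coroot b) /
      D.Bd (D.coroot a) (D.coroot a) := by rw [← hsym, ← h3, h1]
  have e2 : 2 * D.B a b / D.B a a = 2 * D.Bd (D.coroot a) (D.coroot b) /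
      D.Bd (D.coroot b) (D.coroot b) := by rw [← h4, h2, hdsym]
  field_simp at e1 e2
  have h0 : 2 * D.B a b * (D.B a a * D.Bd (D.coroot a) (D.coroot a) -
      D.B b b * D.Bd (D.coroot b) (D.coroot b)) = 0 := by
    linear_combination 2 * ((D.B a a) * e1 - (D.B b b) * e2)
  rcases mul_eq_zero.mp h0 with h | h
  · exact absurd (by linarith : D.B a b = 0) hab
  · linarith

lemma key_const (hirr : D.IsIrreducible) {a b : V} (ha : a ∈ D.roots)
    (hb : b ∈ D.roots) :
    D.B a a * D.Bd (D.coroot a) (D.coroot a) =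
    D.B b b * D.Bd (D.coroot b) (D.coroot b) := by
  have h := hirr.2 a ha b hb
  induction h with
  | refl => rfl
  | tail _ h2 ih =>
      exact (ih h2.1).trans (key_step h2.1 h2.2.1 h2.2.2)

end RootSystemData


/-- If `R` is irreducible, then `φ ∘ φ∨ : V → V` and
`φ∨ ∘ φ : V* → V*` are both multiplication by `d_α`, the square-length of the
coroot of a short root `α`. -/
theorem stmt3 {V : Type} [AddCommGroup V] [Module ℝ V] [FiniteDimensional ℝ V]
    (D : RootSystemData V) (hirr : D.IsIrreducible)
    (hnormV : D.NormalizedPrimal) (hnormVd : D.NormalizedDual)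
    (φ : Module.Dual ℝ V →ₗ[ℝ] V)
    (hφ : ∀ x y : Module.Dual ℝ V, x (φ y) = 2 * D.Bd x y)
    (φv : V →ₗ[ℝ] Module.Dual ℝ V)
    (hφv : ∀ x y : V, φv x y = 2 * D.B x y) :
    ∀ α, D.ShortRoot α →
      φ.comp φv = D.Bd (D.coroot α) (D.coroot α) • (LinearMap.id : V →ₗ[ℝ] V) ∧
      φv.comp φ = D.Bd (D.coroot α) (D.coroot α) •
        (LinearMap.id : Module.Dual ℝ V →ₗ[ℝ] Module.Dual ℝ V) := by
  intro α hα
  set c : ℝ := D.Bd (D.coroot α) (D.coroot α) with hc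
  have hαroot : α ∈ D.roots := hα.1
  have hαα : D.B α α = 1 := hnormV α hα
  have hkey : ∀ β ∈ D.roots, D.B β β * D.Bd (D.coroot β) (D.coroot β) = c := by
    intro β hβ
    have := D.key_const hirr hβ hαroot
    rw [hαα, one_mul] at this
    exact this
  have hcpos : 0 < c := D.Bd_coroot_pos hαroot
  have h2 : φv.comp φ = c • (LinearMap.id : Module.Dual ℝ V →ₗ[ℝ]
      Module.Dual ℝ V) := by
    refine LinearMap.ext fun x => ?_
    refine LinearMap.ext_on (R := ℝ) (M := V) D.span_eq_top ?_
    intro β hβ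
    have hxβ : x β = 2 * D.Bd (D.coroot β) x / D.Bd (D.coroot β) (D.coroot β) :=
      D.dual_coroot_eq β hβ x
    have h5 : D.coroot β (φ x) = 2 * D.B β (φ x) / D.B β β :=
      D.coroot_eq β hβ (φ x)
    have h6 : D.coroot β (φ x) = 2 * D.Bd (D.coroot β) x := hφ (D.coroot β) x
    have h7 : φv (φ x) β = 2 * D.B (φ x) β := hφv (φ x) β
    have hbb := D.B_self_ne_zero hβ
    have hdb := (D.Bd_coroot_pos hβ).ne'
    have hkβ := hkey β hβ
    simp only [LinearMap.comp_apply, LinearMap.smul_apply, LinearMap.id_apply]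
    rw [h7, D.B_symm (φ x) β]
    have h8 : 2 * D.B β (φ x) = D.B β β * (2 * D.Bd (D.coroot β) x) := by
      rw [← h6, h5]; field_simp
    rw [h8, hxβ]
    rw [← hkβ, smul_eq_mul]
    field_simp
  have hinj : Function.Injective φ := by
    intro x y hxy
    have h9 : φv (φ x) = φv (φ y) := by rw [hxy]
    have hx := LinearMap.congr_fun h2 x
    have hy := LinearMap.congr_fun h2 y
    simp only [LinearMap.comp_apply, LinearMap.smul_apply, LinearMap.id_apply]
      at hx hy
    have h10 : c • x = c • y := by rw [← hx, ← hy, h9]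
    exact smul_right_injective _ hcpos.ne' h10
  have hsurj : Function.Surjective φ :=
    (LinearMap.injective_iff_surjective_of_finrank_eq_finrank
      (Subspace.dual_finrank_eq)).mp hinj
  have h1 : φ.comp φv = c • (LinearMap.id : V →ₗ[ℝ] V) := by
    ext v
    obtain ⟨x, rfl⟩ := hsurj v
    have hx := LinearMap.congr_fun h2 x
    simp only [LinearMap.comp_apply, LinearMap.smul_apply, LinearMap.id_apply]
      at hx ⊢
    rw [hx, map_smul]
  exact ⟨h1, h2⟩
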